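/- Let R be a commutative ring, M and M' be R-modules, and φ: M ⊕ M' → N a polynomial law. Then φ has a unique decomposition φ = Σ_{i,j≥0} φ_{(i,j)} where each φ_{(i,j)}: M ⊕ M' → N is a bihomogeneous polynomial law of degree (i,j), meaning φ_{(i,j),A}(a·m, b·m') = a^i b^j φ_{(i,j),A}(m,m') for all R-algebras A, a,b ∈ A, m ∈ A⊗M, m' ∈ A⊗M'. Moreover, if φ is homogeneous of degree d, then φ_{(i,j)} = 0 whenever i+j ≠ d. -/

import Mathlib

open scoped TensorProduct

universe u

/-- A polynomial law `M → N` over `R`: a family of maps `A ⊗[R] M → A ⊗[R] N`, one for every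
commutative `R`-algebra `A`, commuting with base change along all `R`-algebra homomorphisms. -/
structure PolyLaw (R : Type u) [CommRing R] (M N : Type u)
    [AddCommGroup M] [Module R M] [AddCommGroup N] [Module R N] : Type (u + 1) where
  toFun : ∀ (A : Type u) [CommRing A] [Algebra R A], A ⊗[R] M → A ⊗[R] N
  isCompat : ∀ {A B : Type u} [CommRing A] [Algebra R A] [CommRing B] [Algebra R B]
      (φ : A →ₐ[R] B) (x : A ⊗[R] M),
      LinearMap.rTensor N φ.toLinearMap (toFun A x) = toFun B (LinearMap.rTensor M φ.toLinearMap x)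

namespace PolyLaw

variable {R : Type u} [CommRing R] {M N P : Type u}
  [AddCommGroup M] [Module R M] [AddCommGroup N] [Module R N] [AddCommGroup P] [Module R P]

theorem ext' {f g : PolyLaw R M N}
    (h : ∀ (A : Type u) [CommRing A] [Algebra R A] (x : A ⊗[R] M), f.toFun A x = g.toFun A x) :
    f = g := by
  cases f; cases g
  simp only [mk.injEq]
  funext A instA instB x
  exact h A x

/-- A polynomial law is homogeneous of degree `d` if `φ_A (a • m) = a ^ d • φ_A m` always. -/
def IsHomogeneous (f : PolyLaw R M N) (d : ℕ) : Prop :=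
  ∀ (A : Type u) [CommRing A] [Algebra R A] (a : A) (x : A ⊗[R] M),
    f.toFun A (a • x) = a ^ d • f.toFun A x

/-- The polynomial law induced by a linear map. -/
noncomputable def ofLinear (ψ : M →ₗ[R] N) : PolyLaw R M N where
  toFun A _ _ := LinearMap.lTensor A ψ
  isCompat φ x := by
    show LinearMap.rTensor N φ.toLinearMap (LinearMap.lTensor _ ψ x)
      = LinearMap.lTensor _ ψ (LinearMap.rTensor M φ.toLinearMap x)
    rw [← LinearMap.comp_apply, ← LinearMap.comp_apply,
      LinearMap.rTensor_comp_lTensor, LinearMap.lTensor_comp_rTensor]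

/-- Composition of polynomial laws. -/
def comp (g : PolyLaw R N P) (f : PolyLaw R M N) : PolyLaw R M P where
  toFun A _ _ x := g.toFun A (f.toFun A x)
  isCompat φ x := by rw [g.isCompat φ, f.isCompat φ]

/-- Translation by an element `u : N`, as a polynomial law `N → N`. -/
noncomputable def translation (u : N) : PolyLaw R N N where
  toFun A _ _ x := x + (1 : A) ⊗ₜ[R] u
  isCompat φ x := by
    simp [map_add, LinearMap.rTensor_tmul, map_one]

end PolyLaw

namespace PolyLaw

variable {R : Type u} [CommRing R] {M N : Type u}
  [AddCommGroup M] [Module R M] [AddCommGroup N] [Module R N]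

noncomputable instance : Zero (PolyLaw R M N) :=
  ⟨{ toFun := fun A _ _ _ => 0, isCompat := fun φ x => by simp }⟩

noncomputable instance : Add (PolyLaw R M N) :=
  ⟨fun f g =>
    { toFun := fun A _ _ x => f.toFun A x + g.toFun A x
      isCompat := fun φ x => by simp [map_add, f.isCompat, g.isCompat] }⟩

noncomputable instance : Neg (PolyLaw R M N) :=
  ⟨fun f =>
    { toFun := fun A _ _ x => - f.toFun A x
      isCompat := fun φ x => by simp [map_neg, f.isCompat] }⟩

noncomputable instance : SMul R (PolyLaw R M N) :=
  ⟨fun r f =>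
    { toFun := fun A _ _ x => r • f.toFun A x
      isCompat := fun φ x => by simp [map_smul, f.isCompat] }⟩

@[simp] lemma zero_toFun (A : Type u) [CommRing A] [Algebra R A] (x : A ⊗[R] M) :
    (0 : PolyLaw R M N).toFun A x = 0 := rfl

@[simp] lemma add_toFun (f g : PolyLaw R M N) (A : Type u) [CommRing A] [Algebra R A]
    (x : A ⊗[R] M) : (f + g).toFun A x = f.toFun A x + g.toFun A x := rfl

@[simp] lemma neg_toFun (f : PolyLaw R M N) (A : Type u) [CommRing A] [Algebra R A]
    (x : A ⊗[R] M) : (-f).toFun A x = - f.toFun A x := rfl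

@[simp] lemma smul_toFun (r : R) (f : PolyLaw R M N) (A : Type u) [CommRing A] [Algebra R A]
    (x : A ⊗[R] M) : (r • f).toFun A x = r • f.toFun A x := rfl

noncomputable instance : AddCommGroup (PolyLaw R M N) where
  add_assoc a b c := ext' (by intros; simp [add_assoc])
  zero_add a := ext' (by intros; simp)
  add_zero a := ext' (by intros; simp)
  add_comm a b := ext' (by intros; simp [add_comm])
  neg_add_cancel a := ext' (by intros; simp)
  nsmul := nsmulRec
  zsmul := zsmulRec

noncomputable instance : Module R (PolyLaw R M N) where
  one_smul f := ext' (by intros; simp)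
  mul_smul r s f := ext' (by intros; simp [mul_smul])
  smul_zero r := ext' (by intros; simp)
  smul_add r f g := ext' (by intros; simp)
  add_smul r s f := ext' (by intros; simp [add_smul])
  zero_smul f := ext' (by intros; simp)

lemma rTensor_eq_algMap {A B : Type u} [CommRing A] [Algebra R A] [CommRing B] [Algebra R B]
    (φ : A →ₐ[R] B) (x : A ⊗[R] R) :
    LinearMap.rTensor R φ.toLinearMap x = Algebra.TensorProduct.map φ (AlgHom.id R R) x := by
  induction x using TensorProduct.induction_on with
  | zero => simp
  | tmul a r => simp
  | add x y hx hy => simp [map_add, hx, hy]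

noncomputable instance : One (PolyLaw R M R) :=
  ⟨{ toFun := fun A _ _ _ => 1
     isCompat := fun φ x => by rw [rTensor_eq_algMap, map_one] }⟩

noncomputable instance : Mul (PolyLaw R M R) :=
  ⟨fun f g =>
    { toFun := fun A _ _ x => f.toFun A x * g.toFun A x
      isCompat := fun φ x => by
        rw [rTensor_eq_algMap, map_mul, ← rTensor_eq_algMap, ← rTensor_eq_algMap,
          f.isCompat, g.isCompat] }⟩

@[simp] lemma one_toFun (A : Type u) [CommRing A] [Algebra R A] (x : A ⊗[R] M) :
    (1 : PolyLaw R M R).toFun A x = 1 := rfl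

@[simp] lemma mul_toFun (f g : PolyLaw R M R) (A : Type u) [CommRing A] [Algebra R A]
    (x : A ⊗[R] M) : (f * g).toFun A x = f.toFun A x * g.toFun A x := rfl

noncomputable instance : CommRing (PolyLaw R M R) :=
  { (inferInstance : AddCommGroup (PolyLaw R M R)) with
    mul := (· * ·)
    one := 1
    mul_assoc := fun a b c => ext' (by intros; simp [mul_assoc])
    one_mul := fun a => ext' (by intros; simp)
    mul_one := fun a => ext' (by intros; simp)
    left_distrib := fun a b c => ext' (by intros; simp [mul_add])
    right_distrib := fun a b c => ext' (by intros; simp [add_mul])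
    mul_comm := fun a b => ext' (by intros; simp [mul_comm])
    zero_mul := fun a => ext' (by intros; simp)
    mul_zero := fun a => ext' (by intros; simp) }

noncomputable instance : Algebra R (PolyLaw R M R) :=
  Algebra.ofModule (fun r x y => ext' (by intros; simp [smul_mul_assoc]))
    (fun r x y => ext' (by intros; simp [mul_smul_comm]))

end PolyLaw

open PolyLaw

variable (R : Type u) [CommRing R] (M M' N : Type u)
  [AddCommGroup M] [Module R M] [AddCommGroup M'] [Module R M']
  [AddCommGroup N] [Module R N]

/-- A polynomial law `M ⊕ M' → N` is bihomogeneous of degree `(i, j)` if scaling the `M`-component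
by `a` and the `M'`-component by `b` scales the value by `a^i * b^j`. -/
def IsBihomogeneous (c : PolyLaw R (M × M') N) (i j : ℕ) : Prop :=
  ∀ (A : Type u) [CommRing A] [Algebra R A] (a b : A) (x : A ⊗[R] (M × M')),
    c.toFun A ((TensorProduct.prodRight R R A M M').symm
        (a • (TensorProduct.prodRight R R A M M' x).1,
         b • (TensorProduct.prodRight R R A M M' x).2)) =
      (a ^ i * b ^ j) • c.toFun A x

/-- The property of being a (locally finite) bihomogeneous decomposition of `φ`. -/
def IsBihomogeneousDecomposition (φ : PolyLaw R (M × M') N)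
    (c : ℕ × ℕ → PolyLaw R (M × M') N) : Prop :=
  (∀ k : ℕ × ℕ, IsBihomogeneous R M M' N (c k) k.1 k.2) ∧
    ∀ (A : Type u) [CommRing A] [Algebra R A] (x : A ⊗[R] (M × M')),
      {k : ℕ × ℕ | (c k).toFun A x ≠ 0}.Finite ∧
        φ.toFun A x = ∑ᶠ k : ℕ × ℕ, (c k).toFun A x

namespace MvPolynomial

open TensorProduct in
/-- Coefficientwise view of `MvPolynomial σ S ⊗[R] N`. -/
noncomputable def rTensor {R S N σ : Type*} [CommSemiring R] [CommSemiring S] [Algebra R S]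
    [AddCommMonoid N] [Module R N] :
    MvPolynomial σ S ⊗[R] N ≃ₗ[S] (σ →₀ ℕ) →₀ (S ⊗[R] N) :=
  by classical exact
    (AlgebraTensorModule.congr (AddMonoidAlgebra.coeffLinearEquiv S) (LinearEquiv.refl R N)) ≪≫ₗ
      TensorProduct.finsuppLeft R S S N (σ →₀ ℕ)

open TensorProduct in
lemma rTensor_apply_tmul_apply {R S N σ : Type*} [CommSemiring R] [CommSemiring S] [Algebra R S]
    [AddCommMonoid N] [Module R N] (p : MvPolynomial σ S) (n : N) (d : σ →₀ ℕ) :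
    rTensor (p ⊗ₜ[R] n) d = (coeff d p) ⊗ₜ[R] n := by
  classical
  simp [rTensor, coeff]

open TensorProduct in
lemma rTensor_apply_monomial_tmul {R S N σ : Type*} [DecidableEq σ] [CommSemiring R]
    [CommSemiring S] [Algebra R S] [AddCommMonoid N] [Module R N] (e : σ →₀ ℕ) (s : S) (n : N) (d : σ →₀ ℕ) :
    rTensor (monomial e s ⊗ₜ[R] n) d = if e = d then s ⊗ₜ[R] n else 0 := by
  classical
  rw [rTensor_apply_tmul_apply, coeff_monomial]
  split_ifs <;> simp

open TensorProduct in
lemma rTensor_apply_monomial_tmul' {R S N σ : Type*} [CommSemiring R] [CommSemiring S]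
    [Algebra R S] [AddCommMonoid N] [Module R N] (e : σ →₀ ℕ) (s : S) (n : N) :
    rTensor (monomial e s ⊗ₜ[R] n) = Finsupp.single e (s ⊗ₜ[R] n) := by
  classical
  ext d
  simp [rTensor_apply_monomial_tmul, Finsupp.single_apply]

end MvPolynomial

section BihomAux

variable {R M M' N}

open MvPolynomial

/-! ### Generalities on `rTensor` along algebra maps -/

theorem rTensor_smul_alg {P : Type u} [AddCommGroup P] [Module R P]
    {A B : Type u} [CommRing A] [Algebra R A] [CommRing B] [Algebra R B]
    (ψ : A →ₐ[R] B) (s : A) (z : A ⊗[R] P) :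
    LinearMap.rTensor P ψ.toLinearMap (s • z) = ψ s • LinearMap.rTensor P ψ.toLinearMap z := by
  induction z using TensorProduct.induction_on with
  | zero => simp
  | tmul a p => simp [TensorProduct.smul_tmul', smul_eq_mul, map_mul]
  | add u v hu hv => simp [smul_add, hu, hv]

theorem rTensor_comp_alg {P : Type u} [AddCommGroup P] [Module R P]
    {A B C : Type u} [CommRing A] [Algebra R A] [CommRing B] [Algebra R B]
    [CommRing C] [Algebra R C]
    (ψ : B →ₐ[R] C) (χ : A →ₐ[R] B) (z : A ⊗[R] P) :
    LinearMap.rTensor P ψ.toLinearMap (LinearMap.rTensor P χ.toLinearMap z)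
      = LinearMap.rTensor P (ψ.comp χ).toLinearMap z := by
  rw [AlgHom.comp_toLinearMap, LinearMap.rTensor_comp, LinearMap.comp_apply]

theorem prodRight_rTensor_apply {A B : Type u} [CommRing A] [Algebra R A]
    [CommRing B] [Algebra R B] (ψ : A →ₐ[R] B) (x : A ⊗[R] (M × M')) :
    TensorProduct.prodRight R R B M M' (LinearMap.rTensor (M × M') ψ.toLinearMap x)
      = (LinearMap.rTensor M ψ.toLinearMap (TensorProduct.prodRight R R A M M' x).1,
         LinearMap.rTensor M' ψ.toLinearMap (TensorProduct.prodRight R R A M M' x).2) := by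
  induction x using TensorProduct.induction_on with
  | zero => simp; rfl
  | tmul a m => rfl
  | add u v hu hv => simp [hu, hv, Prod.ext_iff]

theorem rTensor_prodRight_symm {A B : Type u} [CommRing A] [Algebra R A]
    [CommRing B] [Algebra R B] (ψ : A →ₐ[R] B) (u : A ⊗[R] M) (v : A ⊗[R] M') :
    LinearMap.rTensor (M × M') ψ.toLinearMap ((TensorProduct.prodRight R R A M M').symm (u, v))
      = (TensorProduct.prodRight R R B M M').symm
          (LinearMap.rTensor M ψ.toLinearMap u, LinearMap.rTensor M' ψ.toLinearMap v) := by
  rw [LinearEquiv.eq_symm_apply, prodRight_rTensor_apply]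
  simp

theorem prodRight_smul {A : Type u} [CommRing A] [Algebra R A] (s : A)
    (x : A ⊗[R] (M × M')) :
    TensorProduct.prodRight R R A M M' (s • x) = s • TensorProduct.prodRight R R A M M' x := by
  induction x using TensorProduct.induction_on with
  | zero => simp
  | tmul a m =>
    obtain ⟨m1, m2⟩ := m
    simp [TensorProduct.smul_tmul', Prod.smul_def]
  | add u v hu hv => simp [smul_add, hu, hv]

theorem prodRight_symm_smul {A : Type u} [CommRing A] [Algebra R A] (s : A)
    (u : A ⊗[R] M) (v : A ⊗[R] M') :
    (TensorProduct.prodRight R R A M M').symm (s • u, s • v)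
      = s • (TensorProduct.prodRight R R A M M').symm (u, v) := by
  rw [LinearEquiv.symm_apply_eq, prodRight_smul]
  simp [Prod.smul_def]

/-! ### The exponent bookkeeping -/

/-- The exponent `(i, j)` as a `Fin 2 →₀ ℕ`. -/
noncomputable def DD (k : ℕ × ℕ) : Fin 2 →₀ ℕ := Finsupp.single 0 k.1 + Finsupp.single 1 k.2

@[simp] theorem DD_zero (k : ℕ × ℕ) : DD k 0 = k.1 := by
  simp [DD, Finsupp.single_apply]

@[simp] theorem DD_one (k : ℕ × ℕ) : DD k 1 = k.2 := by
  simp [DD, Finsupp.single_apply]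

theorem DD_inj : Function.Injective DD := by
  intro k l h
  have h0 : DD k 0 = DD l 0 := by rw [h]
  have h1 : DD k 1 = DD l 1 := by rw [h]
  simp only [DD_zero, DD_one] at h0 h1
  exact Prod.ext h0 h1

theorem DD_surj (d : Fin 2 →₀ ℕ) : DD (d 0, d 1) = d := by
  ext i
  fin_cases i
  · simp
  · simp

theorem DD_bij : Function.Bijective DD :=
  ⟨DD_inj, fun d => ⟨(d 0, d 1), DD_surj d⟩⟩

theorem X_pow_mul_eq {A : Type u} [CommRing A] (k : ℕ × ℕ) :
    (X 0 : MvPolynomial (Fin 2) A) ^ k.1 * X 1 ^ k.2 = monomial (DD k) 1 := by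
  rw [X_pow_eq_monomial, X_pow_eq_monomial, monomial_mul, one_mul]
  rfl

/-! ### The algebra maps -/

/-- Base change `A → A[X₀,X₁]`. -/
noncomputable def iotaAlg (A : Type u) [CommRing A] [Algebra R A] :
    A →ₐ[R] MvPolynomial (Fin 2) A :=
  IsScalarTower.toAlgHom R A _

@[simp] theorem iotaAlg_apply {A : Type u} [CommRing A] [Algebra R A] (a : A) :
    iotaAlg (R := R) A a = C a := by
  simp [iotaAlg, IsScalarTower.coe_toAlgHom', algebraMap_eq]

/-- The scaling substitution `Xᵢ ↦ wᵢ • Xᵢ`. -/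
noncomputable def scAlg {A : Type u} [CommRing A] [Algebra R A] (w : Fin 2 → A) :
    MvPolynomial (Fin 2) A →ₐ[R] MvPolynomial (Fin 2) A :=
  (aeval (fun i => C (w i) * X i)).restrictScalars R

@[simp] theorem scAlg_apply {A : Type u} [CommRing A] [Algebra R A] (w : Fin 2 → A)
    (p : MvPolynomial (Fin 2) A) :
    scAlg (R := R) w p = aeval (fun i => C (w i) * X i) p := rfl

/-- Evaluation at `(1,1)`. -/
noncomputable def evAlg (A : Type u) [CommRing A] [Algebra R A] :
    MvPolynomial (Fin 2) A →ₐ[R] A :=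
  (aeval (fun _ => (1 : A))).restrictScalars R

@[simp] theorem evAlg_apply {A : Type u} [CommRing A] [Algebra R A]
    (p : MvPolynomial (Fin 2) A) :
    evAlg (R := R) A p = aeval (fun _ => (1 : A)) p := rfl

/-- The substitution `X₀ ↦ X₀X₁`, `X₁ ↦ X₁`. -/
noncomputable def hAlg (A : Type u) [CommRing A] [Algebra R A] :
    MvPolynomial (Fin 2) A →ₐ[R] MvPolynomial (Fin 2) A :=
  (aeval ![X 0 * X 1, X 1]).restrictScalars R

@[simp] theorem hAlg_X0 {A : Type u} [CommRing A] [Algebra R A] :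
    hAlg (R := R) A (X 0) = X 0 * X 1 := by
  simp [hAlg, AlgHom.coe_restrictScalars']

@[simp] theorem hAlg_X1 {A : Type u} [CommRing A] [Algebra R A] :
    hAlg (R := R) A (X 1) = X 1 := by
  simp [hAlg, AlgHom.coe_restrictScalars']

theorem mapAlgHom_comp_iotaAlg {A B : Type u} [CommRing A] [Algebra R A]
    [CommRing B] [Algebra R B] (ψ : A →ₐ[R] B) :
    (mapAlgHom (σ := Fin 2) ψ).comp (iotaAlg (R := R) A)
      = (iotaAlg (R := R) B).comp ψ :=
  AlgHom.ext fun a => by simp [mapAlgHom_apply, map_C]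

theorem scAlg_comp_iotaAlg {A : Type u} [CommRing A] [Algebra R A] (w : Fin 2 → A) :
    (scAlg (R := R) w).comp (iotaAlg (R := R) A) = iotaAlg (R := R) A :=
  AlgHom.ext fun a => by simp [aeval_C, algebraMap_eq]

theorem hAlg_comp_iotaAlg {A : Type u} [CommRing A] [Algebra R A] :
    (hAlg (R := R) A).comp (iotaAlg (R := R) A) = iotaAlg (R := R) A :=
  AlgHom.ext fun a => by
    simp [hAlg, AlgHom.coe_restrictScalars', aeval_C, algebraMap_eq]

theorem evAlg_comp_iotaAlg {A : Type u} [CommRing A] [Algebra R A] :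
    (evAlg (R := R) A).comp (iotaAlg (R := R) A) = AlgHom.id R A :=
  AlgHom.ext fun a => by simp [aeval_C]

/-! ### Coefficients of scaled polynomials -/

theorem scAlg_monomial {A : Type u} [CommRing A] [Algebra R A] (w : Fin 2 → A)
    (e : Fin 2 →₀ ℕ) (a : A) :
    scAlg (R := R) w (monomial e a) = monomial e (a * (w 0 ^ e 0 * w 1 ^ e 1)) := by
  rw [scAlg_apply, aeval_monomial]
  simp only [mul_pow, ← C_pow]
  rw [Finsupp.prod_fintype _ _ (fun i => by simp), Fin.prod_univ_two]
  rw [monomial_eq, Finsupp.prod_fintype _ _ (fun i => by simp), Fin.prod_univ_two]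
  rw [algebraMap_eq, C_mul, C_mul]
  ring

theorem coeff_scAlg {A : Type u} [CommRing A] [Algebra R A] (w : Fin 2 → A)
    (p : MvPolynomial (Fin 2) A) (d : Fin 2 →₀ ℕ) :
    coeff d (scAlg (R := R) w p) = w 0 ^ d 0 * w 1 ^ d 1 * coeff d p := by
  induction p using MvPolynomial.induction_on' with
  | monomial e a =>
    rw [scAlg_monomial, coeff_monomial, coeff_monomial]
    split_ifs with h
    · subst h; ring
    · ring
  | add p q hp hq => rw [map_add, coeff_add, hp, hq, coeff_add, mul_add]

/-! ### Tensor coefficient lemmas -/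

/-- Extraction of the coefficient of exponent `d`, as an additive map. -/
noncomputable def coeffAM (A : Type u) [CommRing A] [Algebra R A] (d : Fin 2 →₀ ℕ) :
    (MvPolynomial (Fin 2) A ⊗[R] N) →+ A ⊗[R] N where
  toFun z := MvPolynomial.rTensor z d
  map_zero' := by simp
  map_add' z z' := by
    show MvPolynomial.rTensor (z + z') d = _
    rw [map_add, Finsupp.add_apply]

@[simp] theorem coeffAM_apply {A : Type u} [CommRing A] [Algebra R A] (d : Fin 2 →₀ ℕ)
    (z : MvPolynomial (Fin 2) A ⊗[R] N) :
    coeffAM (R := R) (N := N) A d z = MvPolynomial.rTensor z d := rfl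

theorem coeff_monomial_smul_iota {A : Type u} [CommRing A] [Algebra R A]
    (dd e : Fin 2 →₀ ℕ) (v : A ⊗[R] N) :
    MvPolynomial.rTensor ((monomial dd (1 : A) : MvPolynomial (Fin 2) A)
        • LinearMap.rTensor N (iotaAlg (R := R) A).toLinearMap v) e
      = if dd = e then v else 0 := by
  induction v using TensorProduct.induction_on with
  | zero => simp
  | tmul a n =>
    rw [LinearMap.rTensor_tmul, AlgHom.toLinearMap_apply, iotaAlg_apply,
      TensorProduct.smul_tmul', smul_eq_mul,
      show (monomial dd (1 : A)) * C a = monomial dd a by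
        rw [mul_comm, C_mul_monomial, mul_one],
      MvPolynomial.rTensor_apply_monomial_tmul]
  | add u v hu hv =>
    simp only [map_add, smul_add, Finsupp.add_apply, hu, hv]
    split_ifs <;> simp

theorem rTensor_scAlg_apply {A : Type u} [CommRing A] [Algebra R A] (w : Fin 2 → A)
    (z : MvPolynomial (Fin 2) A ⊗[R] N) (e : Fin 2 →₀ ℕ) :
    MvPolynomial.rTensor (LinearMap.rTensor N (scAlg (R := R) w).toLinearMap z) e
      = (w 0 ^ e 0 * w 1 ^ e 1) • MvPolynomial.rTensor z e := by
  induction z using TensorProduct.induction_on with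
  | zero => simp
  | tmul p n =>
    rw [LinearMap.rTensor_tmul, AlgHom.toLinearMap_apply,
      MvPolynomial.rTensor_apply_tmul_apply, MvPolynomial.rTensor_apply_tmul_apply,
      coeff_scAlg, TensorProduct.smul_tmul', smul_eq_mul]
  | add u v hu hv =>
    simp only [map_add, Finsupp.add_apply, hu, hv, smul_add]

theorem rTensor_mapAlgHom_apply {A B : Type u} [CommRing A] [Algebra R A]
    [CommRing B] [Algebra R B] (ψ : A →ₐ[R] B)
    (z : MvPolynomial (Fin 2) A ⊗[R] N) (e : Fin 2 →₀ ℕ) :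
    MvPolynomial.rTensor
        (LinearMap.rTensor N (mapAlgHom (σ := Fin 2) ψ).toLinearMap z) e
      = LinearMap.rTensor N ψ.toLinearMap (MvPolynomial.rTensor z e) := by
  induction z using TensorProduct.induction_on with
  | zero => simp
  | tmul p n =>
    rw [LinearMap.rTensor_tmul, AlgHom.toLinearMap_apply,
      MvPolynomial.rTensor_apply_tmul_apply, MvPolynomial.rTensor_apply_tmul_apply,
      LinearMap.rTensor_tmul, AlgHom.toLinearMap_apply,
      show ((mapAlgHom (σ := Fin 2) ψ) p) = map (ψ : A →+* B) p from rfl, coeff_map]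
    rfl
  | add u v hu hv =>
    simp only [map_add, Finsupp.add_apply, hu, hv]

theorem rTensor_evAlg_apply {A : Type u} [CommRing A] [Algebra R A]
    (z : MvPolynomial (Fin 2) A ⊗[R] N) :
    LinearMap.rTensor N (evAlg (R := R) A).toLinearMap z
      = (MvPolynomial.rTensor z).sum fun _ v => v := by
  induction z using TensorProduct.induction_on with
  | zero => simp
  | tmul p n =>
    rw [LinearMap.rTensor_tmul, AlgHom.toLinearMap_apply, evAlg_apply]
    induction p using MvPolynomial.induction_on' with
    | monomial e a =>
      rw [aeval_monomial, Finsupp.prod_fintype _ _ (fun i => by simp),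
        Fin.prod_univ_two, one_pow, one_pow, mul_one, mul_one,
        MvPolynomial.rTensor_apply_monomial_tmul',
        Finsupp.sum_single_index rfl]
      simp [Algebra.algebraMap_self_apply]
    | add p q hp hq =>
      rw [map_add, TensorProduct.add_tmul, TensorProduct.add_tmul, map_add,
        Finsupp.sum_add_index (fun _ _ => rfl) (fun _ _ _ _ => rfl), ← hp, ← hq]
  | add u v hu hv =>
    rw [map_add, map_add, Finsupp.sum_add_index (fun _ _ => rfl) (fun _ _ _ _ => rfl),
      hu, hv]

theorem finsum_apply_eq_sum {α P : Type*} [AddCommMonoid P] (f : α →₀ P) :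
    (∑ᶠ a, f a) = f.sum fun _ v => v := by
  rw [finsum_eq_finset_sum_of_support_subset _
    (s := f.support) (fun a ha => Finsupp.mem_support_iff.2 ha)]
  rfl

/-! ### The universal point -/

theorem X_pow_mul_eq' {A : Type u} [CommRing A] (i j : ℕ) :
    (X 0 : MvPolynomial (Fin 2) A) ^ i * X 1 ^ j = monomial (DD (i, j)) 1 := by
  simpa using X_pow_mul_eq (A := A) (i, j)

/-- The universal point `(X₀ ⊗ m, X₁ ⊗ m')` over `A[X₀,X₁]` attached to `x` over `A`. -/
noncomputable def bcPoint (A : Type u) [CommRing A] [Algebra R A] (x : A ⊗[R] (M × M')) :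
    MvPolynomial (Fin 2) A ⊗[R] (M × M') :=
  (TensorProduct.prodRight R R (MvPolynomial (Fin 2) A) M M').symm
    ((X 0 : MvPolynomial (Fin 2) A) • (TensorProduct.prodRight R R (MvPolynomial (Fin 2) A) M M'
        (LinearMap.rTensor (M × M') (iotaAlg (R := R) A).toLinearMap x)).1,
     (X 1 : MvPolynomial (Fin 2) A) • (TensorProduct.prodRight R R (MvPolynomial (Fin 2) A) M M'
        (LinearMap.rTensor (M × M') (iotaAlg (R := R) A).toLinearMap x)).2)

/-- The variant where only the first coordinate is scaled. -/
noncomputable def bcPoint1 (A : Type u) [CommRing A] [Algebra R A] (x : A ⊗[R] (M × M')) :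
    MvPolynomial (Fin 2) A ⊗[R] (M × M') :=
  (TensorProduct.prodRight R R (MvPolynomial (Fin 2) A) M M').symm
    ((X 0 : MvPolynomial (Fin 2) A) • (TensorProduct.prodRight R R (MvPolynomial (Fin 2) A) M M'
        (LinearMap.rTensor (M × M') (iotaAlg (R := R) A).toLinearMap x)).1,
     (TensorProduct.prodRight R R (MvPolynomial (Fin 2) A) M M'
        (LinearMap.rTensor (M × M') (iotaAlg (R := R) A).toLinearMap x)).2)

theorem toFun_bcPoint {c : PolyLaw R (M × M') N} {i j : ℕ}
    (hc : IsBihomogeneous R M M' N c i j) (A : Type u) [CommRing A] [Algebra R A]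
    (x : A ⊗[R] (M × M')) :
    c.toFun (MvPolynomial (Fin 2) A) (bcPoint A x)
      = (monomial (DD (i, j)) (1 : A) : MvPolynomial (Fin 2) A)
          • LinearMap.rTensor N (iotaAlg (R := R) A).toLinearMap (c.toFun A x) := by
  have h := hc (MvPolynomial (Fin 2) A) (X 0) (X 1)
      (LinearMap.rTensor (M × M') (iotaAlg (R := R) A).toLinearMap x)
  rw [bcPoint, h, X_pow_mul_eq' i j, c.isCompat (iotaAlg (R := R) A)]

theorem toFun_bcPoint1 {c : PolyLaw R (M × M') N} {i j : ℕ}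
    (hc : IsBihomogeneous R M M' N c i j) (A : Type u) [CommRing A] [Algebra R A]
    (x : A ⊗[R] (M × M')) :
    c.toFun (MvPolynomial (Fin 2) A) (bcPoint1 A x)
      = ((X 0 : MvPolynomial (Fin 2) A) ^ i)
          • LinearMap.rTensor N (iotaAlg (R := R) A).toLinearMap (c.toFun A x) := by
  have h := hc (MvPolynomial (Fin 2) A) (X 0) 1
      (LinearMap.rTensor (M × M') (iotaAlg (R := R) A).toLinearMap x)
  rw [one_smul, one_pow, mul_one] at h
  rw [bcPoint1, h, c.isCompat (iotaAlg (R := R) A)]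

/-- Image of the universal point under any algebra map out of `A[X₀,X₁]`. -/
theorem rTensor_bcPoint {A B : Type u} [CommRing A] [Algebra R A] [CommRing B] [Algebra R B]
    (ψ : MvPolynomial (Fin 2) A →ₐ[R] B) (x : A ⊗[R] (M × M')) :
    LinearMap.rTensor (M × M') ψ.toLinearMap (bcPoint A x)
      = (TensorProduct.prodRight R R B M M').symm
          (ψ (X 0) • (TensorProduct.prodRight R R B M M'
              (LinearMap.rTensor (M × M')
                (ψ.comp (iotaAlg (R := R) A)).toLinearMap x)).1,
           ψ (X 1) • (TensorProduct.prodRight R R B M M'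
              (LinearMap.rTensor (M × M')
                (ψ.comp (iotaAlg (R := R) A)).toLinearMap x)).2) := by
  have h := prodRight_rTensor_apply ψ
    (LinearMap.rTensor (M × M') (iotaAlg (R := R) A).toLinearMap x)
  rw [rTensor_comp_alg] at h
  rw [bcPoint, rTensor_prodRight_symm, rTensor_smul_alg, rTensor_smul_alg, h]

theorem bcPoint_map {A B : Type u} [CommRing A] [Algebra R A] [CommRing B] [Algebra R B]
    (ψ : A →ₐ[R] B) (x : A ⊗[R] (M × M')) :
    LinearMap.rTensor (M × M') (mapAlgHom (σ := Fin 2) ψ).toLinearMap (bcPoint A x)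
      = bcPoint B (LinearMap.rTensor (M × M') ψ.toLinearMap x) := by
  rw [rTensor_bcPoint, mapAlgHom_comp_iotaAlg, ← rTensor_comp_alg, bcPoint,
    show (mapAlgHom (σ := Fin 2) ψ) (X 0) = map (ψ : A →+* B) (X 0) from rfl,
    show (mapAlgHom (σ := Fin 2) ψ) (X 1) = map (ψ : A →+* B) (X 1) from rfl,
    map_X, map_X]

theorem bcPoint_scale {A : Type u} [CommRing A] [Algebra R A] (a b : A)
    (x : A ⊗[R] (M × M')) :
    bcPoint A ((TensorProduct.prodRight R R A M M').symm
        (a • (TensorProduct.prodRight R R A M M' x).1,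
         b • (TensorProduct.prodRight R R A M M' x).2))
      = LinearMap.rTensor (M × M') (scAlg (R := R) ![a, b]).toLinearMap (bcPoint A x) := by
  rw [rTensor_bcPoint, scAlg_comp_iotaAlg, bcPoint,
    rTensor_prodRight_symm, rTensor_smul_alg, rTensor_smul_alg]
  have h := prodRight_rTensor_apply (iotaAlg (R := R) A) x
  rw [LinearEquiv.apply_symm_apply, h, iotaAlg_apply, iotaAlg_apply]
  have h0 : scAlg (R := R) ![a, b] (X 0) = C a * X 0 := by
    rw [scAlg_apply, aeval_X]
    simp
  have h1 : scAlg (R := R) ![a, b] (X 1) = C b * X 1 := by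
    rw [scAlg_apply, aeval_X]
    simp
  rw [h0, h1]
  simp [smul_smul, mul_comm]

theorem bcPoint_ev {A : Type u} [CommRing A] [Algebra R A] (x : A ⊗[R] (M × M')) :
    LinearMap.rTensor (M × M') (evAlg (R := R) A).toLinearMap (bcPoint A x) = x := by
  rw [rTensor_bcPoint, evAlg_comp_iotaAlg]
  have hid : (AlgHom.id R A).toLinearMap = LinearMap.id := rfl
  rw [hid, LinearMap.rTensor_id, LinearMap.id_apply,
    show evAlg (R := R) A (X 0) = 1 from by rw [evAlg_apply, aeval_X],
    show evAlg (R := R) A (X 1) = 1 from by rw [evAlg_apply, aeval_X],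
    one_smul, one_smul]
  exact (TensorProduct.prodRight R R A M M').symm_apply_apply x

theorem bcPoint_h {A : Type u} [CommRing A] [Algebra R A] (x : A ⊗[R] (M × M')) :
    LinearMap.rTensor (M × M') (hAlg A).toLinearMap (bcPoint A x)
      = (X 1 : MvPolynomial (Fin 2) A) • bcPoint1 A x := by
  rw [rTensor_bcPoint, hAlg_comp_iotaAlg, hAlg_X0, hAlg_X1, bcPoint1,
    ← prodRight_symm_smul, smul_smul, mul_comm (X 1) (X 0)]

/-! ### The canonical components -/

/-- The `(i,j)`-bihomogeneous component of a polynomial law on a product. -/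
noncomputable def phiComp (φ : PolyLaw R (M × M') N) (k : ℕ × ℕ) :
    PolyLaw R (M × M') N where
  toFun A _ _ x :=
    MvPolynomial.rTensor (φ.toFun (MvPolynomial (Fin 2) A) (bcPoint A x)) (DD k)
  isCompat ψ x := by
    rw [← rTensor_mapAlgHom_apply, φ.isCompat (mapAlgHom ψ), bcPoint_map]

theorem phiComp_isBihomogeneous (φ : PolyLaw R (M × M') N) (k : ℕ × ℕ) :
    IsBihomogeneous R M M' N (phiComp φ k) k.1 k.2 := by
  intro A _ _ a b x
  show MvPolynomial.rTensor (φ.toFun _ (bcPoint A _)) (DD k)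
    = (a ^ k.1 * b ^ k.2) • MvPolynomial.rTensor (φ.toFun (MvPolynomial (Fin 2) A) (bcPoint A x)) (DD k)
  rw [bcPoint_scale, ← φ.isCompat (scAlg (R := R) ![a, b]), rTensor_scAlg_apply]
  simp

theorem phiComp_decomposition (φ : PolyLaw R (M × M') N) :
    IsBihomogeneousDecomposition R M M' N φ (phiComp φ) := by
  refine ⟨fun k => phiComp_isBihomogeneous φ k, ?_⟩
  intro A _ _ x
  constructor
  · apply Set.Finite.subset (Set.Finite.preimage (Set.injOn_of_injective DD_inj)
      (MvPolynomial.rTensor (φ.toFun (MvPolynomial (Fin 2) A) (bcPoint A x))).support.finite_toSet)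
    intro k hk
    simp only [Set.mem_preimage, Finset.mem_coe, Finsupp.mem_support_iff]
    exact hk
  · calc φ.toFun A x
        = φ.toFun A (LinearMap.rTensor (M × M')
            (evAlg (R := R) A).toLinearMap (bcPoint A x)) := by rw [bcPoint_ev]
      _ = LinearMap.rTensor N (evAlg (R := R) A).toLinearMap
            (φ.toFun (MvPolynomial (Fin 2) A) (bcPoint A x)) := (φ.isCompat _ _).symm
      _ = (MvPolynomial.rTensor (φ.toFun (MvPolynomial (Fin 2) A) (bcPoint A x))).sum (fun _ v => v) :=
          rTensor_evAlg_apply _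
      _ = ∑ᶠ d, MvPolynomial.rTensor (φ.toFun (MvPolynomial (Fin 2) A) (bcPoint A x)) d :=
          (finsum_apply_eq_sum _).symm
      _ = ∑ᶠ k : ℕ × ℕ, MvPolynomial.rTensor (φ.toFun (MvPolynomial (Fin 2) A) (bcPoint A x)) (DD k) :=
          (finsum_comp DD DD_bij).symm
      _ = ∑ᶠ k : ℕ × ℕ, (phiComp φ k).toFun A x := rfl

theorem decomposition_unique {φ : PolyLaw R (M × M') N}
    {c : ℕ × ℕ → PolyLaw R (M × M') N}
    (hc : IsBihomogeneousDecomposition R M M' N φ c) : c = phiComp φ := by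
  funext k
  apply ext'
  intro A _ _ x
  have hfin := (hc.2 (MvPolynomial (Fin 2) A) (bcPoint A x)).1
  have hsum := (hc.2 (MvPolynomial (Fin 2) A) (bcPoint A x)).2
  have hterm : ∀ k' : ℕ × ℕ,
      coeffAM (R := R) (N := N) A (DD k) ((c k').toFun (MvPolynomial (Fin 2) A) (bcPoint A x))
        = if k' = k then (c k').toFun A x else 0 := by
    intro k'
    rw [coeffAM_apply, toFun_bcPoint (hc.1 k'), coeff_monomial_smul_iota]
    by_cases h : k' = k
    · rw [if_pos (by rw [h]), if_pos h]
    · rw [if_neg (fun hdd => h (DD_inj hdd)), if_neg h]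
  show (c k).toFun A x
    = MvPolynomial.rTensor (φ.toFun (MvPolynomial (Fin 2) A) (bcPoint A x)) (DD k)
  have h2 := AddMonoidHom.map_finsum (coeffAM (R := R) (N := N) A (DD k)) hfin
  calc (c k).toFun A x
      = ∑ᶠ k' : ℕ × ℕ, (coeffAM (R := R) (N := N) A (DD k))
          ((c k').toFun (MvPolynomial (Fin 2) A) (bcPoint A x)) := by
        rw [finsum_congr hterm, finsum_eq_single _ k (fun k' hk' => if_neg hk'),
          if_pos rfl]
    _ = (coeffAM (R := R) (N := N) A (DD k))
          (∑ᶠ k' : ℕ × ℕ, (c k').toFun (MvPolynomial (Fin 2) A) (bcPoint A x)) := h2.symm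
    _ = _ := by rw [← hsum]; rfl

theorem comp_eq_zero_of_homogeneous {φ : PolyLaw R (M × M') N} {d : ℕ}
    (hφ : φ.IsHomogeneous d) {c : ℕ × ℕ → PolyLaw R (M × M') N}
    (hc : IsBihomogeneousDecomposition R M M' N φ c) (k : ℕ × ℕ)
    (hk : k.1 + k.2 ≠ d) : c k = 0 := by
  apply ext'
  intro A _ _ x
  rw [zero_toFun]
  have hfin := (hc.2 (MvPolynomial (Fin 2) A) (bcPoint A x)).1
  have hsum := (hc.2 (MvPolynomial (Fin 2) A) (bcPoint A x)).2
  have hfin1 := (hc.2 (MvPolynomial (Fin 2) A) (bcPoint1 A x)).1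
  have hsum1 := (hc.2 (MvPolynomial (Fin 2) A) (bcPoint1 A x)).2
  have hinjp : ∀ k' : ℕ × ℕ, (k'.1, k'.1 + k'.2) = (k.1, k.1 + k.2) → k' = k := by
    intro k' hp
    rw [Prod.ext_iff] at hp
    exact Prod.ext hp.1 (by omega)
  have hmono : ∀ k' : ℕ × ℕ, hAlg (R := R) A (monomial (DD k') (1 : A))
      = monomial (DD (k'.1, k'.1 + k'.2)) (1 : A) := by
    intro k'
    have h0 : (monomial (DD k') (1 : A) : MvPolynomial (Fin 2) A)
        = X 0 ^ k'.1 * X 1 ^ k'.2 := (X_pow_mul_eq' k'.1 k'.2).symm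
    rw [h0, map_mul, map_pow, map_pow, hAlg_X0, hAlg_X1, mul_pow, mul_assoc,
      ← pow_add, X_pow_mul_eq']
  have hterm1 : ∀ k' : ℕ × ℕ,
      coeffAM (R := R) (N := N) A (DD (k.1, k.1 + k.2))
        (LinearMap.rTensor N (hAlg A).toLinearMap ((c k').toFun (MvPolynomial (Fin 2) A) (bcPoint A x)))
      = if k' = k then (c k').toFun A x else 0 := by
    intro k'
    rw [toFun_bcPoint (hc.1 k'), rTensor_smul_alg, rTensor_comp_alg,
      hAlg_comp_iotaAlg, hmono k', coeffAM_apply, coeff_monomial_smul_iota]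
    by_cases h : k' = k
    · rw [if_pos (by rw [h]), if_pos h]
    · rw [if_neg (fun hdd => h (hinjp k' (DD_inj hdd))), if_neg h]
  have e1 : LinearMap.rTensor N (hAlg A).toLinearMap
        (φ.toFun (MvPolynomial (Fin 2) A) (bcPoint A x))
      = ∑ᶠ k' : ℕ × ℕ, LinearMap.rTensor N (hAlg A).toLinearMap
          ((c k').toFun (MvPolynomial (Fin 2) A) (bcPoint A x)) := by
    rw [hsum]
    exact AddMonoidHom.map_finsum
      (LinearMap.rTensor N (hAlg A).toLinearMap).toAddMonoidHom hfin
  have hfin' : (Function.support fun k' : ℕ × ℕ =>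
      LinearMap.rTensor N (hAlg A).toLinearMap
        ((c k').toFun (MvPolynomial (Fin 2) A) (bcPoint A x))).Finite := by
    apply hfin.subset
    intro k' hk'
    simp only [Function.mem_support] at hk'
    simp only [Set.mem_setOf_eq]
    intro h0
    exact hk' (by rw [h0, map_zero])
  have way1 : coeffAM (R := R) (N := N) A (DD (k.1, k.1 + k.2))
      (LinearMap.rTensor N (hAlg A).toLinearMap
        (φ.toFun (MvPolynomial (Fin 2) A) (bcPoint A x)))
      = (c k).toFun A x := by
    rw [e1, AddMonoidHom.map_finsum (coeffAM (R := R) (N := N) A (DD (k.1, k.1 + k.2))) hfin',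
      finsum_congr hterm1, finsum_eq_single _ k (fun k' hk' => if_neg hk'), if_pos rfl]
  have hterm2 : ∀ k' : ℕ × ℕ,
      coeffAM (R := R) (N := N) A (DD (k.1, k.1 + k.2))
        ((X 1 : MvPolynomial (Fin 2) A) ^ d • (c k').toFun (MvPolynomial (Fin 2) A) (bcPoint1 A x))
      = 0 := by
    intro k'
    rw [toFun_bcPoint1 (hc.1 k'), smul_smul,
      mul_comm ((X 1 : MvPolynomial (Fin 2) A) ^ d), X_pow_mul_eq', coeffAM_apply,
      coeff_monomial_smul_iota,
      if_neg (fun hdd => hk (congrArg Prod.snd (DD_inj hdd)).symm)]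
  have hfin1' : (Function.support fun k' : ℕ × ℕ =>
      (X 1 : MvPolynomial (Fin 2) A) ^ d • (c k').toFun (MvPolynomial (Fin 2) A) (bcPoint1 A x)).Finite := by
    apply hfin1.subset
    intro k' hk'
    simp only [Function.mem_support] at hk'
    simp only [Set.mem_setOf_eq]
    intro h0
    exact hk' (by rw [h0, smul_zero])
  have way2 : coeffAM (R := R) (N := N) A (DD (k.1, k.1 + k.2))
      (LinearMap.rTensor N (hAlg A).toLinearMap
        (φ.toFun (MvPolynomial (Fin 2) A) (bcPoint A x))) = 0 := by
    rw [φ.isCompat (hAlg A), bcPoint_h, hφ (MvPolynomial (Fin 2) A) (X 1) (bcPoint1 A x),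
      hsum1, smul_finsum' _ hfin1,
      AddMonoidHom.map_finsum (coeffAM (R := R) (N := N) A (DD (k.1, k.1 + k.2))) hfin1',
      finsum_congr hterm2, finsum_zero]
  rw [← way1]
  exact way2

end BihomAux

/-- Every polynomial law `φ : M ⊕ M' → N` has a unique decomposition `φ = Σ_{i,j} φ_{(i,j)}` into
bihomogeneous polynomial laws of degree `(i,j)`.  Moreover, if `φ` is homogeneous of degree `d`,
then `φ_{(i,j)} = 0` whenever `i + j ≠ d`. -/
theorem bihomogeneous_decomposition (φ : PolyLaw R (M × M') N) :
    (∃! c : ℕ × ℕ → PolyLaw R (M × M') N, IsBihomogeneousDecomposition R M M' N φ c) ∧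
    (∀ d : ℕ, φ.IsHomogeneous d →
      ∀ c : ℕ × ℕ → PolyLaw R (M × M') N, IsBihomogeneousDecomposition R M M' N φ c →
        ∀ k : ℕ × ℕ, k.1 + k.2 ≠ d → c k = 0) := by
  constructor
  · exact ⟨phiComp φ, phiComp_decomposition φ, fun c hc => decomposition_unique hc⟩
  · intro d hφ c hc k hk
    exact comp_eq_zero_of_homogeneous hφ hc k hk
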